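/- arXiv:1211.6246 — 4 statements merged into one kernel-verified Lean document; each statement's English description precedes it below -/
import Mathlib

section
/- Let Λ be a lattice of full rank in ℝ^n and suppose B > 2ν(Λ). Then (B − 2ν(Λ))^n / det Λ ≤ |Λ ∩ [0,B)^n| ≤ (B + 2ν(Λ))^n / det Λ. -/
open MeasureTheory Metric Set Submodule Bornology ENNReal

/-- The covering radius of a lattice: the supremum over `x` of the distance from `x`
to the nearest lattice point. -/
noncomputable def covRad {n : ℕ} (Λ : Submodule ℤ (EuclideanSpace ℝ (Fin n))) : ℝ :=
  ⨆ x : EuclideanSpace ℝ (Fin n), Metric.infDist x (Λ : Set (EuclideanSpace ℝ (Fin n)))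

/-- The half-open cube `[0, B)^n`. -/
def cube (n : ℕ) (B : ℝ) : Set (EuclideanSpace ℝ (Fin n)) :=
  {x | ∀ i, 0 ≤ x i ∧ x i < B}

variable {n : ℕ}

local notation "E" n => EuclideanSpace ℝ (Fin n)

lemma coord_abs_le_norm (y : EuclideanSpace ℝ (Fin n)) (i : Fin n) : |y i| ≤ ‖y‖ := by
  rw [EuclideanSpace.norm_eq]
  rw [← Real.sqrt_sq_eq_abs]
  apply Real.sqrt_le_sqrt
  calc (y i)^2 = ‖y i‖^2 := by rw [Real.norm_eq_abs, sq_abs]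
  _ ≤ ∑ j, ‖y j‖^2 :=
    Finset.single_le_sum (f := fun j => ‖y j‖^2) (fun j _ => sq_nonneg _) (Finset.mem_univ i)

lemma ind_le_ind {S T : Set (EuclideanSpace ℝ (Fin n))} {a b : EuclideanSpace ℝ (Fin n)}
    (h : a ∈ S → b ∈ T) :
    S.indicator (fun _ => (1:ℝ≥0∞)) a ≤ T.indicator (fun _ => (1:ℝ≥0∞)) b := by
  classical
  by_cases ha : a ∈ S
  · simp [ha, h ha]
  · simp [ha]

variable (Λ : Submodule ℤ (EuclideanSpace ℝ (Fin n))) [DiscreteTopology Λ] [IsZLattice ℝ Λ]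

lemma lattice_isClosed : IsClosed (Λ : Set (EuclideanSpace ℝ (Fin n))) := by
  haveI : DiscreteTopology Λ.toAddSubgroup := inferInstanceAs (DiscreteTopology Λ)
  exact AddSubgroup.isClosed_of_discrete (H := Λ.toAddSubgroup)

lemma infDist_bddAbove :
    BddAbove (Set.range fun x : EuclideanSpace ℝ (Fin n) =>
      infDist x (Λ : Set (EuclideanSpace ℝ (Fin n)))) := by
  classical
  set b := Module.Free.chooseBasis ℤ Λ
  set b' := b.ofZLatticeBasis ℝ
  obtain ⟨R, hR⟩ := (ZSpan.fundamentalDomain_isBounded b').exists_norm_le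
  refine ⟨R, ?_⟩
  rintro r ⟨x, rfl⟩
  have hfloor : ((ZSpan.floor b' x : EuclideanSpace ℝ (Fin n))) ∈ (Λ : Set (EuclideanSpace ℝ (Fin n))) := by
    have h2 : span ℤ (Set.range ⇑b') = Λ := b.ofZLatticeBasis_span ℝ
    have := (ZSpan.floor b' x).2
    exact h2.le this
  calc infDist x _ ≤ dist x ((ZSpan.floor b' x : EuclideanSpace ℝ (Fin n))) :=
        infDist_le_dist_of_mem hfloor
  _ = ‖ZSpan.fract b' x‖ := by rw [dist_eq_norm, ZSpan.fract_apply]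
  _ ≤ R := hR _ (ZSpan.fract_mem_fundamentalDomain b' x)

lemma infDist_le_covRad (x : EuclideanSpace ℝ (Fin n)) :
    infDist x (Λ : Set (EuclideanSpace ℝ (Fin n))) ≤ covRad Λ :=
  le_ciSup (infDist_bddAbove Λ) x

lemma covRad_nonneg : 0 ≤ covRad Λ :=
  le_trans infDist_nonneg (infDist_le_covRad Λ 0)

lemma exists_nearest (x : EuclideanSpace ℝ (Fin n)) :
    ∃ q ∈ (Λ : Set (EuclideanSpace ℝ (Fin n))), dist x q ≤ covRad Λ := by
  obtain ⟨q, hq, hdq⟩ := (lattice_isClosed Λ).exists_infDist_eq_dist ⟨0, Λ.zero_mem⟩ x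
  exact ⟨q, hq, hdq ▸ infDist_le_covRad Λ x⟩

set_option linter.unusedSectionVars false
set_option maxHeartbeats 2000000

/-- Number (as `ℝ≥0∞`-valued tsum of indicators) of lattice points `p` with `p + x ∈ S`. -/
noncomputable def latCount (S : Set (EuclideanSpace ℝ (Fin n))) (x : EuclideanSpace ℝ (Fin n)) :
    ℝ≥0∞ :=
  ∑' (p : Λ), S.indicator (fun _ => (1:ℝ≥0∞)) (↑p + x)

lemma latCount_le (S T : Set (EuclideanSpace ℝ (Fin n))) (x y : EuclideanSpace ℝ (Fin n))
    (e : Λ → Λ) (he : Function.Injective e)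
    (h : ∀ p : Λ, (p : EuclideanSpace ℝ (Fin n)) + x ∈ S → ((e p : EuclideanSpace ℝ (Fin n)) + y ∈ T)) :
    latCount Λ S x ≤ latCount Λ T y := by
  calc latCount Λ S x
      ≤ ∑' (p : Λ), T.indicator (fun _ => (1:ℝ≥0∞)) ((e p : EuclideanSpace ℝ (Fin n)) + y) :=
        ENNReal.tsum_le_tsum (fun p => ind_le_ind (h p))
    _ ≤ latCount Λ T y :=
        ENNReal.tsum_comp_le_tsum_of_injective he
          (fun p : Λ => T.indicator (fun _ => (1:ℝ≥0∞)) ((p : EuclideanSpace ℝ (Fin n)) + y))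

lemma setLIntegral_latCount {S : Set (EuclideanSpace ℝ (Fin n))} (hS : MeasurableSet S)
    {F : Set (EuclideanSpace ℝ (Fin n))} (hF : IsAddFundamentalDomain Λ F volume) :
    ∫⁻ x in F, latCount Λ S x = volume S := by
  have hmeas : ∀ p : Λ, Measurable (fun x : EuclideanSpace ℝ (Fin n) =>
      S.indicator (fun _ => (1:ℝ≥0∞)) ((p : EuclideanSpace ℝ (Fin n)) + x)) := fun p =>
    (measurable_one.indicator hS).comp (measurable_const_add _)
  rw [show (fun x => latCount Λ S x) = fun x => ∑' (p : Λ),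
      S.indicator (fun _ => (1:ℝ≥0∞)) (↑p + x) from rfl]
  rw [lintegral_tsum (fun p => (hmeas p).aemeasurable)]
  haveI : MeasurableVAdd Λ (EuclideanSpace ℝ (Fin n)) :=
    (inferInstance : MeasurableVAdd Λ.toAddSubgroup (EuclideanSpace ℝ (Fin n)))
  haveI : VAddInvariantMeasure Λ (EuclideanSpace ℝ (Fin n)) volume :=
    (inferInstance : VAddInvariantMeasure Λ.toAddSubgroup (EuclideanSpace ℝ (Fin n)) volume)
  have h1 : ∫⁻ (x : EuclideanSpace ℝ (Fin n)), S.indicator (fun _ => (1:ℝ≥0∞)) x = volume S := by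
    rw [lintegral_indicator hS]
    simp
  have := hF.lintegral_eq_tsum'' (S.indicator (fun _ => (1:ℝ≥0∞)))
  rw [h1] at this
  rw [this]
  rfl

lemma slab_eq_preimage (a c : ℝ) :
    {x : EuclideanSpace ℝ (Fin n) | ∀ i, a ≤ x i ∧ x i < c} =
      (MeasurableEquiv.toLp 2 (Fin n → ℝ)).symm ⁻¹' (Set.univ.pi fun _ => Set.Ico a c) := by
  ext x
  simp [Set.mem_pi, Set.mem_Ico]

lemma slab_measurable (a c : ℝ) :
    MeasurableSet {x : EuclideanSpace ℝ (Fin n) | ∀ i, a ≤ x i ∧ x i < c} := by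
  rw [slab_eq_preimage]
  exact (MeasurableEquiv.toLp 2 (Fin n → ℝ)).symm.measurable
    (MeasurableSet.univ_pi fun _ => measurableSet_Ico)

lemma slab_volume (a c : ℝ) :
    volume {x : EuclideanSpace ℝ (Fin n) | ∀ i, a ≤ x i ∧ x i < c} =
      ENNReal.ofReal (c - a) ^ n := by
  rw [slab_eq_preimage]
  rw [(EuclideanSpace.volume_preserving_symm_measurableEquiv_toLp (Fin n)).measure_preimage
    ((MeasurableSet.univ_pi fun _ => measurableSet_Ico).nullMeasurableSet)]
  rw [volume_pi_pi]
  simp [Real.volume_Ico]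

lemma cube_measurable (B : ℝ) : MeasurableSet (cube n B) := slab_measurable 0 B

lemma lattice_inter_finite {S : Set (EuclideanSpace ℝ (Fin n))} (hS : IsBounded S) :
    ((Λ : Set (EuclideanSpace ℝ (Fin n))) ∩ S).Finite := by
  obtain ⟨R, hR⟩ := hS.subset_closedBall 0
  have hsub : ((Λ : Set (EuclideanSpace ℝ (Fin n))) ∩ S) ⊆
      ((Λ : Set (EuclideanSpace ℝ (Fin n))) ∩ closedBall 0 R) :=
    Set.inter_subset_inter_right _ hR
  refine Set.Finite.subset ?_ hsub
  have hcpt : IsCompact ((Λ : Set (EuclideanSpace ℝ (Fin n))) ∩ closedBall 0 R) :=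
    (isCompact_closedBall 0 R).inter_left (lattice_isClosed Λ)
  haveI : DiscreteTopology ((Λ : Set (EuclideanSpace ℝ (Fin n))) ∩ closedBall 0 R :
      Set (EuclideanSpace ℝ (Fin n))) :=
    DiscreteTopology.of_subset (inferInstanceAs (DiscreteTopology Λ))
      (Set.inter_subset_left)
  exact hcpt.finite (isDiscrete_iff_discreteTopology.mpr inferInstance)

lemma latCount_zero_eq {S : Set (EuclideanSpace ℝ (Fin n))}
    (hfin : ((Λ : Set (EuclideanSpace ℝ (Fin n))) ∩ S).Finite) :
    latCount Λ S 0 = (((Λ : Set (EuclideanSpace ℝ (Fin n))) ∩ S).ncard : ℝ≥0∞) := by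
  classical
  set S' : Set Λ := (Subtype.val : Λ → EuclideanSpace ℝ (Fin n)) ⁻¹' S with hS'
  have h1 : latCount Λ S 0 = ∑' (p : Λ), S'.indicator (fun _ => (1:ℝ≥0∞)) p := by
    refine tsum_congr fun p => ?_
    by_cases hp : (p : EuclideanSpace ℝ (Fin n)) ∈ S
    · simp [Set.indicator_apply, hp, hS']
    · simp [Set.indicator_apply, hp, hS']
  rw [h1, ← tsum_subtype S' (fun _ => (1:ℝ≥0∞)), ENNReal.tsum_set_one]
  have h3 : (Subtype.val : Λ → EuclideanSpace ℝ (Fin n)) '' S' =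
      (Λ : Set (EuclideanSpace ℝ (Fin n))) ∩ S := by
    rw [hS', Set.image_preimage_eq_inter_range, Subtype.range_coe, Set.inter_comm]
  have h4 : S'.encard = ((Λ : Set (EuclideanSpace ℝ (Fin n))) ∩ S).encard := by
    rw [← h3, Function.Injective.encard_image Subtype.val_injective]
  rw [h4, ← hfin.cast_ncard_eq]
  norm_cast

lemma cube_isBounded {B : ℝ} (hB : 0 ≤ B) : IsBounded (cube n B) := by
  rw [isBounded_iff_forall_norm_le]
  refine ⟨Real.sqrt (n * B ^ 2), fun x hx => ?_⟩
  rw [EuclideanSpace.norm_eq]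
  apply Real.sqrt_le_sqrt
  calc ∑ i, ‖x i‖ ^ 2 ≤ ∑ _i : Fin n, B ^ 2 := by
        refine Finset.sum_le_sum fun i _ => ?_
        have h1 := (hx i).1
        have h2 := (hx i).2
        rw [Real.norm_eq_abs, sq_abs]
        nlinarith
  _ = n * B ^ 2 := by
        rw [Finset.sum_const, Finset.card_univ, Fintype.card_fin, nsmul_eq_mul]

theorem lattice_points_in_cube_bounds' (B : ℝ) (hB : B > 2 * covRad Λ) :
    (B - 2 * covRad Λ) ^ n / ZLattice.covolume Λ ≤
      (((Λ : Set (EuclideanSpace ℝ (Fin n))) ∩ cube n B).ncard : ℝ) ∧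
    (((Λ : Set (EuclideanSpace ℝ (Fin n))) ∩ cube n B).ncard : ℝ) ≤
      (B + 2 * covRad Λ) ^ n / ZLattice.covolume Λ := by
  classical
  have hν0 : 0 ≤ covRad Λ := covRad_nonneg Λ
  set ν : ℝ := covRad Λ with hνdef
  have hB0 : 0 < B := by linarith
  set Cm : Set (EuclideanSpace ℝ (Fin n)) := {x | ∀ i, ν ≤ x i ∧ x i < B - ν} with hCm
  set Cp : Set (EuclideanSpace ℝ (Fin n)) := {x | ∀ i, -ν ≤ x i ∧ x i < B + ν} with hCp
  obtain ⟨F, hFd, hFb⟩ : ∃ F : Set (EuclideanSpace ℝ (Fin n)),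
      IsAddFundamentalDomain Λ F volume ∧ IsBounded F :=
    ⟨_, ZLattice.isAddFundamentalDomain (Module.Free.chooseBasis ℤ Λ) volume,
      ZSpan.fundamentalDomain_isBounded _⟩
  have hT : ((Λ : Set (EuclideanSpace ℝ (Fin n))) ∩ cube n B).Finite :=
    lattice_inter_finite Λ (cube_isBounded hB0.le)
  set N : ℕ := ((Λ : Set (EuclideanSpace ℝ (Fin n))) ∩ cube n B).ncard with hN
  have hNlat : latCount Λ (cube n B) 0 = (N : ℝ≥0∞) := latCount_zero_eq Λ hT
  -- pointwise claims
  have claim1 : ∀ x, latCount Λ Cm x ≤ latCount Λ (cube n B) 0 := by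
    intro x
    obtain ⟨q, hqΛ, hdq⟩ := exists_nearest Λ x
    refine latCount_le Λ _ _ _ _ (fun p => p + ⟨q, hqΛ⟩)
      (fun p p' h => by simpa using h) ?_
    intro p hp i
    have hcoord : |x i - q i| ≤ ν := by
      have h0 := coord_abs_le_norm (x - q) i
      have h2 : (x - q) i = x i - q i := by simp
      rw [h2] at h0
      calc |x i - q i| ≤ ‖x - q‖ := h0
      _ = dist x q := (dist_eq_norm x q).symm
      _ ≤ ν := hdq
    have hpi := hp i
    have hadd : ((p : EuclideanSpace ℝ (Fin n)) + x) i = (p : EuclideanSpace ℝ (Fin n)) i + x i := by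
      simp
    have habs := abs_le.mp hcoord
    have hgoal : (((p + ⟨q, hqΛ⟩ : Λ) : EuclideanSpace ℝ (Fin n)) + 0) i
        = (p : EuclideanSpace ℝ (Fin n)) i + q i := by
      push_cast
      simp
    rw [hgoal]
    rw [hadd] at hpi
    constructor <;> [linarith [hpi.1]; linarith [hpi.2]]
  have claim2 : ∀ x, latCount Λ (cube n B) 0 ≤ latCount Λ Cp x := by
    intro x
    obtain ⟨q, hqΛ, hdq⟩ := exists_nearest Λ x
    refine latCount_le Λ _ _ _ _ (fun p => p - ⟨q, hqΛ⟩)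
      (fun p p' h => by simpa using h) ?_
    intro p hp i
    have hcoord : |x i - q i| ≤ ν := by
      have h0 := coord_abs_le_norm (x - q) i
      have h2 : (x - q) i = x i - q i := by simp
      rw [h2] at h0
      calc |x i - q i| ≤ ‖x - q‖ := h0
      _ = dist x q := (dist_eq_norm x q).symm
      _ ≤ ν := hdq
    have hpi : 0 ≤ ((p : EuclideanSpace ℝ (Fin n)) + 0) i ∧
        ((p : EuclideanSpace ℝ (Fin n)) + 0) i < B := hp i
    have hz : ((p : EuclideanSpace ℝ (Fin n)) + 0) i = (p : EuclideanSpace ℝ (Fin n)) i := by simp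
    rw [hz] at hpi
    have habs := abs_le.mp hcoord
    have hgoal : (((p - ⟨q, hqΛ⟩ : Λ) : EuclideanSpace ℝ (Fin n)) + x) i
        = (p : EuclideanSpace ℝ (Fin n)) i - q i + x i := by
      push_cast
      simp
    rw [hgoal]
    constructor <;> [linarith [hpi.1]; linarith [hpi.2]]
  -- integrate
  have hvolF : volume F ≠ ⊤ := hFb.measure_lt_top.ne
  have hcov : volume F = ENNReal.ofReal (ZLattice.covolume Λ) := by
    rw [ZLattice.covolume_eq_measure_fundamentalDomain Λ volume hFd, ofReal_measureReal hvolF]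
  have low : ENNReal.ofReal (B - 2 * ν) ^ n ≤ (N : ℝ≥0∞) * ENNReal.ofReal (ZLattice.covolume Λ) := by
    have h1 : volume Cm = ENNReal.ofReal (B - ν - ν) ^ n := slab_volume ν (B - ν)
    have h2 : (B - ν - ν) = B - 2 * ν := by ring
    have low0 : ENNReal.ofReal (B - 2 * ν) ^ n ≤ (N : ℝ≥0∞) * volume F := by
      calc ENNReal.ofReal (B - 2 * ν) ^ n = volume Cm := by rw [h1, h2]
      _ = ∫⁻ x in F, latCount Λ Cm x :=
          (setLIntegral_latCount Λ (slab_measurable ν (B - ν)) hFd).symm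
      _ ≤ ∫⁻ _x in F, (N : ℝ≥0∞) := lintegral_mono fun x => (claim1 x).trans_eq hNlat
      _ = (N : ℝ≥0∞) * volume F := by rw [setLIntegral_const]
    rwa [hcov] at low0
  have high : (N : ℝ≥0∞) * ENNReal.ofReal (ZLattice.covolume Λ) ≤ ENNReal.ofReal (B + 2 * ν) ^ n := by
    have h1 : volume Cp = ENNReal.ofReal (B + ν - -ν) ^ n := slab_volume (-ν) (B + ν)
    have h2 : (B + ν - -ν) = B + 2 * ν := by ring
    have high0 : (N : ℝ≥0∞) * volume F ≤ ENNReal.ofReal (B + 2 * ν) ^ n := by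
      calc (N : ℝ≥0∞) * volume F = ∫⁻ _x in F, (N : ℝ≥0∞) := by rw [setLIntegral_const]
      _ ≤ ∫⁻ x in F, latCount Λ Cp x :=
          lintegral_mono fun x => le_trans (le_of_eq hNlat.symm) (claim2 x)
      _ = volume Cp := setLIntegral_latCount Λ (slab_measurable (-ν) (B + ν)) hFd
      _ = ENNReal.ofReal (B + 2 * ν) ^ n := by rw [h1, h2]
    rwa [hcov] at high0
  -- convert to reals
  have hcovpos : 0 < ZLattice.covolume Λ (volume) := ZLattice.covolume_pos Λ volume
  have hBm : 0 ≤ B - 2 * ν := by linarith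
  have lowR : (B - 2 * ν) ^ n ≤ (N : ℝ) * ZLattice.covolume Λ := by
    have := low
    rw [← ENNReal.ofReal_pow hBm, ← ENNReal.ofReal_natCast N,
      ← ENNReal.ofReal_mul (by positivity)] at this
    exact (ENNReal.ofReal_le_ofReal_iff (by positivity)).mp this
  have highR : (N : ℝ) * ZLattice.covolume Λ ≤ (B + 2 * ν) ^ n := by
    have := high
    rw [← ENNReal.ofReal_pow (by linarith), ← ENNReal.ofReal_natCast N,
      ← ENNReal.ofReal_mul (by positivity)] at this
    exact (ENNReal.ofReal_le_ofReal_iff (by positivity)).mp this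
  constructor
  · rw [div_le_iff₀ hcovpos]
    exact lowR
  · rw [le_div_iff₀ hcovpos]
    exact highR


theorem lattice_points_in_cube_bounds (n : ℕ) (Λ : Submodule ℤ (EuclideanSpace ℝ (Fin n)))
    [DiscreteTopology Λ] [IsZLattice ℝ Λ] (B : ℝ) (hB : B > 2 * covRad Λ) :
    (B - 2 * covRad Λ) ^ n / ZLattice.covolume Λ ≤
      (((Λ : Set (EuclideanSpace ℝ (Fin n))) ∩ cube n B).ncard : ℝ) ∧
    (((Λ : Set (EuclideanSpace ℝ (Fin n))) ∩ cube n B).ncard : ℝ) ≤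
      (B + 2 * covRad Λ) ^ n / ZLattice.covolume Λ :=
  lattice_points_in_cube_bounds' Λ B hB
end

section
/- For every natural number n ≥ 1, the finite product ∏_{i=2}^{n+1} ζ(i)^{-1} is at least 0.434, where ζ denotes the Riemann zeta function. -/
/-- The real Riemann zeta value `ζ(i) = ∑_{k=1}^∞ k^{-i}`. -/
noncomputable def zetaR (i : ℕ) : ℝ := ∑' k : ℕ, 1 / (k + 1 : ℝ) ^ i

namespace ZetaAux

lemma summable_aux (i : ℕ) (hi : 2 ≤ i) :
    Summable (fun k : ℕ => 1 / ((k : ℝ) + 1) ^ i) := by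
  have h : Summable (fun n : ℕ => 1 / (n : ℝ) ^ i) :=
    Real.summable_one_div_nat_pow.2 (by omega)
  have := (summable_nat_add_iff (f := fun n : ℕ => 1 / (n : ℝ) ^ i) 1).2 h
  simpa using this

lemma one_le_zetaR (i : ℕ) (hi : 2 ≤ i) : 1 ≤ zetaR i := by
  have h := Summable.le_tsum (summable_aux i hi) 0
    (fun k _ => by positivity)
  simpa [zetaR] using h

lemma zetaR_pos (i : ℕ) (hi : 2 ≤ i) : 0 < zetaR i :=
  lt_of_lt_of_le one_pos (one_le_zetaR i hi)

/-- Tail bound: `∑_{k ≥ M} 1/(k+1)^(j+2) ≤ 1/((M+1)^j * M)` for `M ≥ 1`. -/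
lemma zetaR_upper (j M : ℕ) (hM : 1 ≤ M) :
    zetaR (j + 2) ≤ (∑ k ∈ Finset.range M, 1 / ((k : ℝ) + 1) ^ (j + 2))
      + 1 / (((M : ℝ) + 1) ^ j * M) := by
  have hsum := summable_aux (j + 2) (by omega)
  have hsplit := Summable.sum_add_tsum_nat_add M hsum
  have htail : (∑' k : ℕ, 1 / (((k + M : ℕ) : ℝ) + 1) ^ (j + 2))
      ≤ 1 / (((M : ℝ) + 1) ^ j * M) := by
    apply Real.tsum_le_of_sum_range_le (fun n => by positivity)
    intro n
    have key : ∀ k : ℕ, 1 / (((k + M : ℕ) : ℝ) + 1) ^ (j + 2)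
        ≤ (1 / ((M : ℝ) + 1) ^ j) * (1 / ((k : ℝ) + M) - 1 / ((k : ℝ) + M + 1)) := by
      intro k
      have hx : (1 : ℝ) ≤ (k : ℝ) + M := by
        have : (1 : ℝ) ≤ (M : ℝ) := by exact_mod_cast hM
        have hk : (0 : ℝ) ≤ (k : ℝ) := Nat.cast_nonneg k
        linarith
      set x : ℝ := (k : ℝ) + M with hxdef
      have hx0 : 0 < x := lt_of_lt_of_le one_pos hx
      have hsub : 1 / x - 1 / (x + 1) = 1 / (x * (x + 1)) := by
        field_simp
        ring
      have hcast : (((k + M : ℕ) : ℝ) + 1) = x + 1 := by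
        push_cast [hxdef]; ring
      rw [hcast, hsub, div_mul_div_comm, one_mul]
      apply one_div_le_one_div_of_le (by positivity)
      have hMx : (M : ℝ) + 1 ≤ x + 1 := by
        have hk : (0 : ℝ) ≤ (k : ℝ) := Nat.cast_nonneg k
        rw [hxdef]
        have hk : (0 : ℝ) ≤ (k : ℝ) := Nat.cast_nonneg k
        linarith
      calc ((M : ℝ) + 1) ^ j * (x * (x + 1))
          ≤ (x + 1) ^ j * ((x + 1) * (x + 1)) := by
            apply mul_le_mul
            · exact pow_le_pow_left₀ (by positivity) hMx j
            · apply mul_le_mul_of_nonneg_right (by linarith) (by linarith)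
            · positivity
            · positivity
        _ = (x + 1) ^ (j + 2) := by ring
    calc ∑ k ∈ Finset.range n, 1 / (((k + M : ℕ) : ℝ) + 1) ^ (j + 2)
        ≤ ∑ k ∈ Finset.range n,
            (1 / ((M : ℝ) + 1) ^ j) * (1 / ((k : ℝ) + M) - 1 / ((k : ℝ) + M + 1)) :=
          Finset.sum_le_sum (fun k _ => key k)
      _ = (1 / ((M : ℝ) + 1) ^ j) *
            ∑ k ∈ Finset.range n, ((fun k : ℕ => 1 / ((k : ℝ) + M)) k
              - (fun k : ℕ => 1 / ((k : ℝ) + M)) (k + 1)) := by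
          rw [← Finset.mul_sum]
          congr 1
          apply Finset.sum_congr rfl
          intro k _
          push_cast
          ring_nf
      _ ≤ (1 / ((M : ℝ) + 1) ^ j) * (1 / (M : ℝ)) := by
          rw [Finset.sum_range_sub' (fun k : ℕ => 1 / ((k : ℝ) + M))]
          have hM0 : (0 : ℝ) < M := by exact_mod_cast hM
          have h1 : (0 : ℝ) ≤ 1 / ((n : ℝ) + M) := by positivity
          have : (0 : ℝ) + 0 ≤ 1 / ((n : ℝ) + M) := by linarith
          apply mul_le_mul_of_nonneg_left _ (by positivity)
          simp only [Nat.cast_zero, zero_add]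
          linarith
      _ = 1 / (((M : ℝ) + 1) ^ j * M) := by
          rw [div_mul_div_comm, one_mul]
  have : zetaR (j + 2) = (∑ k ∈ Finset.range M, 1 / ((k : ℝ) + 1) ^ (j + 2))
      + ∑' k : ℕ, 1 / (((k + M : ℕ) : ℝ) + 1) ^ (j + 2) := by
    rw [zetaR]
    rw [← hsplit]
    try push_cast
    try ring_nf
  rw [this]
  exact add_le_add_right htail _

/-- Explicit upper bounds on ζ(i) for 2 ≤ i ≤ 10. -/
noncomputable def B : ℕ → ℝ
  | 2 => 1.6457235
  | 3 => 1.2028268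
  | 4 => 1.0823624
  | 5 => 1.0369295
  | 6 => 1.0173432
  | 7 => 1.0083493
  | 8 => 1.0040774
  | 9 => 1.0020084
  | 10 => 1.0009946
  | _ => 1

lemma one_le_B (i : ℕ) : 1 ≤ B i := by
  unfold B
  split <;> norm_num

lemma zetaR_le_B (i : ℕ) (h2 : 2 ≤ i) (h10 : i ≤ 10) : zetaR i ≤ B i := by
  interval_cases i <;>
  · refine le_trans (zetaR_upper _ 25 (by norm_num)) ?_
    rw [show (25 : ℕ) = 25 from rfl]
    unfold B
    norm_num [Finset.sum_range_succ]

/-- For `i ≥ 11`, `ζ(i) ≤ exp (1.06 * (1/2)^i)`. -/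
lemma zetaR_le_exp (i : ℕ) (hi : 11 ≤ i) :
    zetaR i ≤ Real.exp (1.06 * (1 / 2 : ℝ) ^ i) := by
  obtain ⟨j, rfl⟩ : ∃ j, i = j + 2 := ⟨i - 2, by omega⟩
  have hj : 9 ≤ j := by omega
  have hup := zetaR_upper j 2 (by norm_num)
  have hsum2 : (∑ k ∈ Finset.range 2, 1 / ((k : ℝ) + 1) ^ (j + 2))
      = 1 + 1 / 2 ^ (j + 2) := by
    norm_num [Finset.sum_range_succ]
  rw [hsum2] at hup
  have hgeom : (2 : ℝ) ^ j ≤ (512 / 19683) * 3 ^ j := by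
    have h23 : ((2 : ℝ) / 3) ^ j ≤ ((2 : ℝ) / 3) ^ 9 :=
      pow_le_pow_of_le_one (by norm_num) (by norm_num) hj
    rw [div_pow] at h23
    rw [div_le_iff₀ (by positivity)] at h23
    calc (2 : ℝ) ^ j ≤ (2 / 3) ^ 9 * 3 ^ j := h23
      _ = (512 / 19683) * 3 ^ j := by norm_num
  have htail : 1 / (((2 : ℝ) + 1) ^ j * 2) ≤ 0.06 * (1 / 2 : ℝ) ^ (j + 2) := by
    have h1 : (2:ℝ) ^ j ≤ 0.03 * 3 ^ j :=
      le_trans hgeom (mul_le_mul_of_nonneg_right (by norm_num) (by positivity))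
    have h3 : ((2 : ℝ) + 1) ^ j = 3 ^ j := by norm_num
    rw [h3, div_pow, one_pow, mul_one_div, div_le_div_iff₀ (by positivity) (by positivity)]
    have h2 : (2:ℝ) ^ (j + 2) = 4 * 2 ^ j := by ring
    rw [h2]
    nlinarith [h1]
  have hhalf : (1 / 2 : ℝ) ^ (j + 2) = 1 / 2 ^ (j + 2) := by
    rw [div_pow]; norm_num
  have hstep : zetaR (j + 2) ≤ 1 + 1.06 * (1 / 2 : ℝ) ^ (j + 2) := by
    have : 1 / ((2 : ℝ)) ^ (j + 2) = (1 / 2 : ℝ) ^ (j + 2) := hhalf.symm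
    calc zetaR (j + 2) ≤ 1 + 1 / 2 ^ (j + 2) + 1 / (((2:ℕ) : ℝ) + 1) ^ j / 2 := by
          have := hup
          push_cast at this ⊢
          rw [div_div]
          convert this using 2
      _ ≤ 1 + (1 / 2 : ℝ) ^ (j + 2) + 0.06 * (1 / 2 : ℝ) ^ (j + 2) := by
          push_cast
          rw [div_div]
          have := htail
          push_cast at this
          rw [hhalf]
          linarith
      _ = 1 + 1.06 * (1 / 2 : ℝ) ^ (j + 2) := by ring
  calc zetaR (j + 2) ≤ 1 + 1.06 * (1 / 2 : ℝ) ^ (j + 2) := hstep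
    _ ≤ Real.exp (1.06 * (1 / 2 : ℝ) ^ (j + 2)) := by
        have := Real.add_one_le_exp (1.06 * (1 / 2 : ℝ) ^ (j + 2))
        linarith

lemma geom_tail (m : ℕ) (hm : 10 ≤ m) :
    ∑ i ∈ Finset.Ioc 10 m, (1 / 2 : ℝ) ^ i ≤ (1 / 2 : ℝ) ^ 10 - (1 / 2 : ℝ) ^ m := by
  induction m, hm using Nat.le_induction with
  | base => simp
  | succ m hm ih =>
      rw [Finset.sum_Ioc_succ_top (by omega)]
      have : (1 / 2 : ℝ) ^ (m + 1) = (1/2) * (1/2 : ℝ) ^ m := by ring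
      rw [this] at *
      linarith

lemma prod_B_le : ∏ i ∈ Finset.Icc 2 10, B i ≤ 2.2977 := by
  rw [show Finset.Icc 2 10 = ({2,3,4,5,6,7,8,9,10} : Finset ℕ) from rfl]
  rw [Finset.prod_insert (by decide), Finset.prod_insert (by decide),
    Finset.prod_insert (by decide), Finset.prod_insert (by decide),
    Finset.prod_insert (by decide), Finset.prod_insert (by decide),
    Finset.prod_insert (by decide), Finset.prod_insert (by decide),
    Finset.prod_singleton]
  unfold B
  norm_num

lemma prod_zeta_le (n : ℕ) (hn : 1 ≤ n) :
    ∏ i ∈ Finset.Icc 2 (n + 1), zetaR i ≤ 2.304 := by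
  have hIcc : ∀ m : ℕ, Finset.Icc 2 m = Finset.Ioc 1 m := by
    intro m; rfl
  by_cases hsmall : n + 1 ≤ 10
  · calc ∏ i ∈ Finset.Icc 2 (n + 1), zetaR i
        ≤ ∏ i ∈ Finset.Icc 2 (n + 1), B i := by
          apply Finset.prod_le_prod
          · intro i hi
            exact le_of_lt (zetaR_pos i (Finset.mem_Icc.1 hi).1)
          · intro i hi
            have h := Finset.mem_Icc.1 hi
            exact zetaR_le_B i h.1 (by omega)
      _ ≤ ∏ i ∈ Finset.Icc 2 10, B i := by
          have hsplit := Finset.prod_Ioc_consecutive (fun i => B i)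
            (by omega : 1 ≤ n + 1) (by omega : n + 1 ≤ 10)
          rw [hIcc (n+1), hIcc 10, ← hsplit]
          have hone : (1:ℝ) ≤ ∏ i ∈ Finset.Ioc (n+1) 10, B i := by
            calc (1:ℝ) = ∏ _i ∈ Finset.Ioc (n+1) 10, (1:ℝ) := by
                  rw [Finset.prod_const_one]
              _ ≤ ∏ i ∈ Finset.Ioc (n+1) 10, B i :=
                  Finset.prod_le_prod (fun i _ => zero_le_one) (fun i _ => one_le_B i)
          have hnn : (0:ℝ) ≤ ∏ i ∈ Finset.Ioc 1 (n+1), B i :=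
            Finset.prod_nonneg (fun i _ => le_trans zero_le_one (one_le_B i))
          exact le_mul_of_one_le_right hnn hone
      _ ≤ 2.2977 := prod_B_le
      _ ≤ 2.304 := by norm_num
  · push_neg at hsmall
    have h10 : 10 ≤ n + 1 := by omega
    rw [hIcc]
    rw [← Finset.prod_Ioc_consecutive (fun i => zetaR i) (by omega : 1 ≤ 10) h10]
    have h1 : ∏ i ∈ Finset.Ioc 1 10, zetaR i ≤ 2.2977 := by
      calc ∏ i ∈ Finset.Ioc 1 10, zetaR i
          = ∏ i ∈ Finset.Icc 2 10, zetaR i := by rw [hIcc]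
        _ ≤ ∏ i ∈ Finset.Icc 2 10, B i := by
            apply Finset.prod_le_prod
            · intro i hi
              exact le_of_lt (zetaR_pos i (Finset.mem_Icc.1 hi).1)
            · intro i hi
              have h := Finset.mem_Icc.1 hi
              exact zetaR_le_B i h.1 h.2
        _ ≤ 2.2977 := prod_B_le
    have h2 : ∏ i ∈ Finset.Ioc 10 (n + 1), zetaR i ≤ 1.00266 := by
      calc ∏ i ∈ Finset.Ioc 10 (n + 1), zetaR i
          ≤ ∏ i ∈ Finset.Ioc 10 (n + 1), Real.exp (1.06 * (1 / 2 : ℝ) ^ i) := by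
            apply Finset.prod_le_prod
            · intro i hi
              exact le_of_lt (zetaR_pos i (by
                have := (Finset.mem_Ioc.1 hi).1; omega))
            · intro i hi
              exact zetaR_le_exp i (by have := (Finset.mem_Ioc.1 hi).1; omega)
        _ = Real.exp (∑ i ∈ Finset.Ioc 10 (n + 1), 1.06 * (1 / 2 : ℝ) ^ i) := by
            rw [Real.exp_sum]
        _ ≤ Real.exp (1.06 * (1 / 2 : ℝ) ^ 10) := by
            apply Real.exp_le_exp.2
            rw [← Finset.mul_sum]
            have := geom_tail (n + 1) h10
            have hpow : (0:ℝ) ≤ (1/2:ℝ) ^ (n+1) := by positivity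
            nlinarith
        _ ≤ 1 / (1 - 1.06 * (1 / 2 : ℝ) ^ 10) := by
            apply Real.exp_bound_div_one_sub_of_interval <;> norm_num
        _ ≤ 1.00266 := by norm_num
    have hz1 : 0 ≤ ∏ i ∈ Finset.Ioc 1 10, zetaR i :=
      Finset.prod_nonneg (fun i hi => le_of_lt (zetaR_pos i (by
        have := (Finset.mem_Ioc.1 hi).1; omega)))
    have hz2 : 0 ≤ ∏ i ∈ Finset.Ioc 10 (n + 1), zetaR i :=
      Finset.prod_nonneg (fun i hi => le_of_lt (zetaR_pos i (by
        have := (Finset.mem_Ioc.1 hi).1; omega)))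
    calc (∏ i ∈ Finset.Ioc 1 10, zetaR i) * ∏ i ∈ Finset.Ioc 10 (n + 1), zetaR i
        ≤ 2.2977 * 1.00266 := by
          apply mul_le_mul h1 h2 hz2 (by norm_num)
      _ ≤ 2.304 := by norm_num

end ZetaAux

theorem zeta_inv_prod_ge (n : ℕ) (hn : 1 ≤ n) :
    ∏ i ∈ Finset.Icc 2 (n + 1), (zetaR i)⁻¹ ≥ 0.434 := by
  have hpos : 0 < ∏ i ∈ Finset.Icc 2 (n + 1), zetaR i :=
    Finset.prod_pos (fun i hi => ZetaAux.zetaR_pos i (Finset.mem_Icc.1 hi).1)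
  rw [Finset.prod_inv_distrib, ge_iff_le]
  have h1 : ((2.304 : ℝ))⁻¹ ≤ (∏ i ∈ Finset.Icc 2 (n + 1), zetaR i)⁻¹ :=
    inv_anti₀ hpos (ZetaAux.prod_zeta_le n hn)
  have h2 : (0.434 : ℝ) ≤ ((2.304 : ℝ))⁻¹ := by norm_num
  linarith
end

section
/- For every natural number n ≥ 1, one has |Σ_{k=1}^n φ(k) − 3n²/π²| ≤ (3/2)n + n·log n, where φ is Euler's totient function and log is the natural logarithm. -/
open Finset ArithmeticFunction

-- real Möbius series value
lemma moebius_tsum_eq :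
    ∑' d : ℕ, ((ArithmeticFunction.moebius d : ℝ) / (d : ℝ) ^ 2) = 6 / Real.pi ^ 2 := by
  have hs : 1 < (2 : ℂ).re := by norm_num
  have h := LSeries_one_mul_Lseries_moebius hs
  rw [LSeries_one_eq_riemannZeta hs, riemannZeta_two] at h
  have hpi : ((Real.pi : ℂ)) ≠ 0 := by exact_mod_cast Real.pi_ne_zero
  have hL : LSeries (fun n => ((ArithmeticFunction.moebius n : ℤ) : ℂ)) 2
      = 6 / (Real.pi : ℂ) ^ 2 := by
    field_simp at h ⊢
    linear_combination h
  have hterm : LSeries (fun n => ((ArithmeticFunction.moebius n : ℤ) : ℂ)) 2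
      = ∑' d : ℕ, (((ArithmeticFunction.moebius d : ℝ) / (d : ℝ) ^ 2 : ℝ) : ℂ) := by
    unfold LSeries
    refine tsum_congr fun d => ?_
    rcases eq_or_ne d 0 with rfl | hd
    · simp [LSeries.term_zero]
    · rw [LSeries.term_of_ne_zero hd]
      push_cast
      rw [Complex.cpow_two]
  rw [hterm, ← Complex.ofReal_tsum] at hL
  have h6 : ((6 / Real.pi ^ 2 : ℝ) : ℂ) = 6 / (Real.pi : ℂ) ^ 2 := by push_cast; ring
  exact_mod_cast hL.trans h6.symm

-- swap: sum over k ≤ n of sum over divisor pairs of k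
lemma swap_div_sum (n : ℕ) (f : ℕ → ℕ → ℝ) :
    ∑ k ∈ Icc 1 n, ∑ p ∈ k.divisorsAntidiagonal, f p.1 p.2
      = ∑ d ∈ Icc 1 n, ∑ m ∈ Icc 1 (n / d), f d m := by
  rw [Finset.sum_sigma', Finset.sum_sigma']
  refine Finset.sum_nbij' (fun x => ⟨x.2.1, x.2.2⟩) (fun x => ⟨x.1 * x.2, (x.1, x.2)⟩)
    ?_ ?_ ?_ ?_ ?_
  · rintro ⟨k, d, m⟩ h
    simp only [Finset.mem_sigma, Finset.mem_Icc, Nat.mem_divisorsAntidiagonal] at h ⊢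
    obtain ⟨⟨hk1, hk2⟩, hdm, hk0⟩ := h
    have hd0 : 0 < d := Nat.pos_of_ne_zero (by rintro rfl; simp at hdm; omega)
    have hm0 : 0 < m := Nat.pos_of_ne_zero (by rintro rfl; simp at hdm; omega)
    refine ⟨⟨hd0, ?_⟩, hm0, ?_⟩
    · calc d ≤ d * m := Nat.le_mul_of_pos_right _ hm0
        _ = k := hdm
        _ ≤ n := hk2
    · rw [Nat.le_div_iff_mul_le hd0, mul_comm, hdm]; exact hk2
  · rintro ⟨d, m⟩ h
    simp only [Finset.mem_sigma, Finset.mem_Icc] at h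
    obtain ⟨⟨hd1, hd2⟩, hm1, hm2⟩ := h
    rw [Nat.le_div_iff_mul_le (by omega : 0 < d)] at hm2
    refine Finset.mem_sigma.mpr ⟨Finset.mem_Icc.mpr ⟨?_, ?_⟩,
      Nat.mem_divisorsAntidiagonal.mpr ⟨rfl, ?_⟩⟩
    · show 1 ≤ d * m; exact Nat.one_le_iff_ne_zero.mpr (by positivity)
    · show d * m ≤ n; rw [mul_comm]; exact hm2
    · positivity
  · rintro ⟨k, d, m⟩ h
    simp only [Finset.mem_sigma, Nat.mem_divisorsAntidiagonal] at h
    obtain ⟨_, hdm, _⟩ := h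
    simp [hdm]
  · rintro ⟨d, m⟩ _; rfl
  · rintro ⟨k, d, m⟩ _; rfl

-- totient via Möbius
lemma totient_eq_moebius_sum {k : ℕ} (hk : 0 < k) :
    (Nat.totient k : ℝ) = ∑ p ∈ k.divisorsAntidiagonal,
      (ArithmeticFunction.moebius p.1 : ℝ) * (p.2 : ℝ) := by
  have := (ArithmeticFunction.sum_eq_iff_sum_mul_moebius_eq
    (R := ℝ) (f := fun k => (Nat.totient k : ℝ)) (g := fun k => (k : ℝ))).mp ?_ k hk
  · exact this.symm
  · intro m hm
    exact_mod_cast congrArg (Nat.cast : ℕ → ℝ) (Nat.sum_totient m)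

-- harmonic bound on Icc
lemma harmonic_Icc_le (n : ℕ) : ∑ d ∈ Icc 1 n, (d : ℝ)⁻¹ ≤ 1 + Real.log n := by
  have h := harmonic_le_one_add_log n
  have he : ∑ d ∈ Icc 1 n, (d : ℝ)⁻¹ = (harmonic n : ℝ) := by
    rw [harmonic]
    push_cast
    rw [Finset.range_eq_Ico, Finset.sum_Ico_eq_sum_range]
    rw [show Finset.Icc 1 n = Finset.Ico 1 (n+1) by rw [Finset.Ico_add_one_right_eq_Icc],
      Finset.sum_Ico_eq_sum_range]
    simp [add_comm]
  rw [he]; exact_mod_cast h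

-- tail bound for sum of inverse squares
lemma tail_sq_sum (n : ℕ) (hn : 1 ≤ n) (m : ℕ) :
    ∑ d ∈ range m, (1 : ℝ) / ((n : ℝ) + 1 + d) ^ 2 ≤ 1 / (n : ℝ) := by
  have key : ∀ m : ℕ, ∑ d ∈ range m, (1 : ℝ) / ((n : ℝ) + 1 + d) ^ 2
      ≤ 1 / n - 1 / ((n : ℝ) + m) := by
    intro m
    induction m with
    | zero => simp
    | succ m ih =>
      rw [Finset.sum_range_succ]
      have hnm : (0:ℝ) < (n : ℝ) + m := by positivity
      have hnm1 : (0:ℝ) < (n : ℝ) + m + 1 := by positivity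
      have hstep : (1 : ℝ) / ((n : ℝ) + 1 + m) ^ 2
          ≤ 1 / ((n : ℝ) + m) - 1 / ((n : ℝ) + m + 1) := by
        rw [div_sub_div _ _ (ne_of_gt hnm) (ne_of_gt hnm1)]
        rw [div_le_div_iff₀ (by positivity) (by positivity)]
        ring_nf
        nlinarith [hnm, hnm1]
      push_cast
      calc _ ≤ (1 / (n:ℝ) - 1 / ((n : ℝ) + m)) + (1 / ((n : ℝ) + m) - 1 / ((n : ℝ) + m + 1)) :=
            add_le_add ih hstep
        _ = 1 / n - 1 / ((n : ℝ) + (m + 1)) := by ring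
  calc _ ≤ 1 / n - 1 / ((n : ℝ) + m) := key m
    _ ≤ 1 / n := by
        have : (0:ℝ) < (n:ℝ) + m := by positivity
        have : (0:ℝ) ≤ 1 / ((n:ℝ) + m) := by positivity
        linarith

lemma gauss_Icc (q : ℕ) : ∑ m ∈ Icc 1 q, (m : ℝ) = q * (q + 1) / 2 := by
  have h1 : ∑ m ∈ Icc 1 q, (m : ℝ) = ∑ m ∈ range (q + 1), (m : ℝ) := by
    rw [show range (q+1) = insert 0 (Icc 1 q) by ext x; simp [Nat.lt_succ_iff]; omega,
      Finset.sum_insert (by simp)]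
    simp
  have h2 := Finset.sum_range_id_mul_two (q + 1)
  have h3 : ((∑ i ∈ range (q+1), i : ℕ) : ℝ) * 2 = (q + 1) * q := by
    exact_mod_cast congrArg (Nat.cast : ℕ → ℝ) h2
  rw [h1]
  push_cast at h3 ⊢
  linarith

theorem totient_sum_estimate (n : ℕ) (hn : 1 ≤ n) :
    |(∑ k ∈ Finset.Icc 1 n, (Nat.totient k : ℝ)) - 3 * (n : ℝ) ^ 2 / Real.pi ^ 2| ≤
      3 / 2 * (n : ℝ) + (n : ℝ) * Real.log n := by
  set f : ℕ → ℝ := fun d => (ArithmeticFunction.moebius d : ℝ) / (d : ℝ) ^ 2 with hfdef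
  have hf : Summable f := by
    apply Summable.of_norm_bounded (g := fun d : ℕ => 1 / (d : ℝ) ^ 2)
      (Real.summable_one_div_nat_pow.mpr one_lt_two)
    intro d
    rcases eq_or_ne d 0 with rfl | hd
    · simp [hfdef]
    · have hd1 : (1:ℝ) ≤ (d:ℝ) ^ 2 := by
        have : (1:ℝ) ≤ (d:ℝ) := by exact_mod_cast Nat.one_le_iff_ne_zero.mpr hd
        nlinarith
      have hmu : |(ArithmeticFunction.moebius d : ℝ)| ≤ 1 := by
        exact_mod_cast ArithmeticFunction.abs_moebius_le_one (n := d)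
      rw [Real.norm_eq_abs, hfdef, abs_div, abs_of_nonneg (by positivity : (0:ℝ) ≤ (d:ℝ)^2)]
      apply div_le_div_of_nonneg_right hmu ?_ |>.trans
      · exact le_rfl
      · linarith
  -- partial sum P and tail
  set P : ℝ := ∑ d ∈ Icc 1 n, f d with hPdef
  have hrange : ∑ d ∈ range (n + 1), f d = P := by
    rw [show range (n+1) = insert 0 (Icc 1 n) by ext x; simp [Nat.lt_succ_iff]; omega,
      Finset.sum_insert (by simp), hPdef]
    simp [hfdef]
  have hsplit := Summable.sum_add_tsum_nat_add (n + 1) hf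
  rw [hrange] at hsplit
  have htail : |(∑' d, f d) - P| ≤ 1 / (n : ℝ) := by
    have heq : (∑' d, f d) - P = ∑' i, f (i + (n + 1)) := by linarith
    rw [heq]
    have hs1 : Summable fun i => ‖f (i + (n + 1))‖ := ((summable_nat_add_iff (n+1)).2 hf).norm
    refine (norm_tsum_le_tsum_norm hs1).trans ?_
    apply Real.tsum_le_of_sum_range_le (fun i => norm_nonneg _)
    intro m
    refine le_trans ?_ (tail_sq_sum n hn m)
    apply Finset.sum_le_sum
    intro i _
    have hi0 : i + (n + 1) ≠ 0 := by omega
    have hmu : |(ArithmeticFunction.moebius (i + (n+1)) : ℝ)| ≤ 1 := by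
      exact_mod_cast ArithmeticFunction.abs_moebius_le_one (n := i + (n+1))
    have hcast : ((i + (n + 1) : ℕ) : ℝ) = (n : ℝ) + 1 + i := by push_cast; ring
    have hpos : (0:ℝ) < ((n : ℝ) + 1 + i) ^ 2 := by positivity
    rw [Real.norm_eq_abs, hfdef]
    simp only []
    rw [abs_div, abs_of_nonneg (by positivity : (0:ℝ) ≤ ((i + (n+1) : ℕ):ℝ)^2), hcast]
    exact div_le_div_of_nonneg_right hmu hpos.le |>.trans (by rw [one_div])
  -- main identity
  have hS : ∑ k ∈ Icc 1 n, (Nat.totient k : ℝ)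
      = ∑ d ∈ Icc 1 n, (ArithmeticFunction.moebius d : ℝ)
          * (((n / d : ℕ) : ℝ) * ((n / d : ℕ) + 1) / 2) := by
    rw [Finset.sum_congr rfl fun k hk =>
      totient_eq_moebius_sum (by simp only [mem_Icc] at hk; omega)]
    rw [swap_div_sum n (fun d m => (ArithmeticFunction.moebius d : ℝ) * m)]
    refine Finset.sum_congr rfl fun d _ => ?_
    rw [← Finset.mul_sum, gauss_Icc]
  -- termwise bound for A
  have hA : |∑ d ∈ Icc 1 n, (ArithmeticFunction.moebius d : ℝ)
        * (((n / d : ℕ) : ℝ) * ((n / d : ℕ) + 1) / 2 - (n : ℝ) ^ 2 / (2 * (d : ℝ) ^ 2))|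
      ≤ (n : ℝ) / 2 * (1 + Real.log n) := by
    refine (Finset.abs_sum_le_sum_abs _ _).trans ?_
    have hbound : ∀ d ∈ Icc 1 n, |(ArithmeticFunction.moebius d : ℝ)
        * (((n / d : ℕ) : ℝ) * ((n / d : ℕ) + 1) / 2 - (n : ℝ) ^ 2 / (2 * (d : ℝ) ^ 2))|
        ≤ (n : ℝ) / 2 * (d : ℝ)⁻¹ := by
      intro d hd
      simp only [mem_Icc] at hd
      have hd0 : (0:ℝ) < d := by exact_mod_cast hd.1
      set q : ℕ := n / d with hq
      set x : ℝ := (n : ℝ) / d with hx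
      have hq1 : (q : ℝ) ≤ x := Nat.cast_div_le
      have hq2 : x < q + 1 := by
        rw [hx, div_lt_iff₀ hd0]
        have := Nat.lt_div_mul_add (a := n) (b := d) (by exact_mod_cast hd0)
        calc (n:ℝ) < ((n / d * d + d : ℕ) : ℝ) := by exact_mod_cast this
          _ = ((q : ℝ) + 1) * d := by push_cast; ring
      have hx1 : (1:ℝ) ≤ x := by
        rw [hx, le_div_iff₀ hd0]
        simpa using (by exact_mod_cast hd.2 : (d:ℝ) ≤ n)
      have hmu : |(ArithmeticFunction.moebius d : ℝ)| ≤ 1 := by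
        exact_mod_cast ArithmeticFunction.abs_moebius_le_one (n := d)
      have hxd : (n : ℝ) ^ 2 / (2 * (d : ℝ) ^ 2) = x ^ 2 / 2 := by
        rw [hx]; field_simp
      rw [hxd, abs_mul]
      have hinner : |(q : ℝ) * ((q : ℝ) + 1) / 2 - x ^ 2 / 2| ≤ x / 2 := by
        rw [abs_le]
        constructor <;> nlinarith [hq1, hq2, hx1, sq_nonneg ((q:ℝ) - x)]
      calc |(ArithmeticFunction.moebius d : ℝ)| * |(q : ℝ) * ((q : ℝ) + 1) / 2 - x ^ 2 / 2|
          ≤ 1 * (x / 2) := mul_le_mul hmu hinner (abs_nonneg _) zero_le_one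
        _ = (n : ℝ) / 2 * (d : ℝ)⁻¹ := by rw [hx]; ring
    refine (Finset.sum_le_sum hbound).trans ?_
    rw [← Finset.mul_sum]
    have := harmonic_Icc_le n
    have hn2 : (0:ℝ) ≤ (n : ℝ) / 2 := by positivity
    exact mul_le_mul_of_nonneg_left this hn2
  -- assemble
  have hT : ∑' d, f d = 6 / Real.pi ^ 2 := moebius_tsum_eq
  have hPf : (n : ℝ) ^ 2 / 2 * P = ∑ d ∈ Icc 1 n,
      (ArithmeticFunction.moebius d : ℝ) * ((n : ℝ) ^ 2 / (2 * (d : ℝ) ^ 2)) := by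
    rw [hPdef, Finset.mul_sum]
    refine Finset.sum_congr rfl fun d hd => ?_
    simp only [mem_Icc] at hd
    have hd0 : (d : ℝ) ≠ 0 := by
      have : (1:ℝ) ≤ (d:ℝ) := by exact_mod_cast hd.1
      linarith
    simp only [hfdef]
    field_simp
  have hdecomp : (∑ k ∈ Icc 1 n, (Nat.totient k : ℝ)) - 3 * (n : ℝ) ^ 2 / Real.pi ^ 2
      = (∑ d ∈ Icc 1 n, (ArithmeticFunction.moebius d : ℝ)
          * (((n / d : ℕ) : ℝ) * ((n / d : ℕ) + 1) / 2 - (n : ℝ) ^ 2 / (2 * (d : ℝ) ^ 2)))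
        + (n : ℝ) ^ 2 / 2 * (P - ∑' d, f d) := by
    rw [hS, show (3:ℝ) * (n : ℝ) ^ 2 / Real.pi ^ 2 = (n : ℝ) ^ 2 / 2 * (∑' d, f d) by
      rw [hT]; ring]
    simp only [mul_sub]
    rw [Finset.sum_sub_distrib, ← hPf]
    ring
  rw [hdecomp]
  have h1 : |(n : ℝ) ^ 2 / 2 * (P - ∑' d, f d)| ≤ (n : ℝ) / 2 := by
    rw [abs_mul, abs_of_nonneg (by positivity : (0:ℝ) ≤ (n : ℝ) ^ 2 / 2), abs_sub_comm]
    calc (n : ℝ) ^ 2 / 2 * |∑' d, f d - P| ≤ (n : ℝ) ^ 2 / 2 * (1 / n) :=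
          mul_le_mul_of_nonneg_left htail (by positivity)
      _ = (n : ℝ) / 2 := by
          have hn0 : (n : ℝ) ≠ 0 := by positivity
          field_simp
  have hlog : 0 ≤ Real.log n := Real.log_nonneg (by exact_mod_cast hn)
  have hn1 : (1:ℝ) ≤ n := by exact_mod_cast hn
  calc |_ + _| ≤ _ + _ := abs_add_le _ _
    _ ≤ (n : ℝ) / 2 * (1 + Real.log n) + (n : ℝ) / 2 := add_le_add hA h1
    _ ≤ 3 / 2 * (n : ℝ) + (n : ℝ) * Real.log n := by nlinarith
end

section
/- For every natural number n ≥ 1, the coprimality probability p_n = |{(x,y) ∈ ℕ² : 0 ≤ x,y ≤ n, gcd(x,y) = 1}| / (n+1)² satisfies p_n ≥ (6/π²)·n²/(n+1)² − (n·log n)/(n+1)² − (3n)/(2(n+1)²) + 1/(n+1)². -/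
open Finset ArithmeticFunction Real
open scoped ArithmeticFunction.Moebius ArithmeticFunction.zeta

/-- The probability that two integers chosen uniformly and independently from `{0, 1, …, n}`
are coprime. -/
noncomputable def coprimeProb (n : ℕ) : ℝ :=
  (((Finset.range (n + 1) ×ˢ Finset.range (n + 1)).filter
      fun p => Nat.gcd p.1 p.2 = 1).card : ℝ) / ((n : ℝ) + 1) ^ 2


lemma moebius_sum_dvd (n x y : ℕ) (hx : x ∈ Finset.Ioc 0 n) (_hy : y ∈ Finset.Ioc 0 n) :
    ∑ d ∈ Icc 1 n, (if d ∣ x ∧ d ∣ y then μ d else 0)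
      = if Nat.gcd x y = 1 then 1 else 0 := by
  simp only [mem_Ioc] at hx
  have hg0 : 0 < Nat.gcd x y := Nat.gcd_pos_of_pos_left _ hx.1
  have hfe : (Icc 1 n).filter (fun d => d ∣ x ∧ d ∣ y) = (Nat.gcd x y).divisors := by
    ext d
    simp only [mem_filter, mem_Icc, Nat.mem_divisors, Nat.dvd_gcd_iff]
    constructor
    · rintro ⟨_, h⟩; exact ⟨h, hg0.ne'⟩
    · rintro ⟨⟨h1, h2⟩, _⟩
      have hd0 : 0 < d := Nat.pos_of_dvd_of_pos h1 hx.1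
      exact ⟨⟨hd0, le_trans (Nat.le_of_dvd hx.1 h1) hx.2⟩, h1, h2⟩
  rw [← Finset.sum_filter, hfe, ← coe_mul_zeta_apply, moebius_mul_coe_zeta, one_apply]

lemma inner_count (n d : ℕ) :
    ∑ p ∈ Finset.Ioc 0 n ×ˢ Finset.Ioc 0 n, (if d ∣ p.1 ∧ d ∣ p.2 then μ d else 0)
      = μ d * ((n / d : ℕ) : ℤ) ^ 2 := by
  rw [← Finset.sum_filter, Finset.sum_const, Finset.filter_product,
    Finset.card_product, Nat.Ioc_filter_dvd_card_eq_div, nsmul_eq_mul]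
  push_cast
  ring

lemma count_pos_part (n : ℕ) :
    ((((Finset.Ioc 0 n) ×ˢ (Finset.Ioc 0 n)).filter fun p => Nat.gcd p.1 p.2 = 1).card : ℤ)
      = ∑ d ∈ Icc 1 n, μ d * ((n / d : ℕ) : ℤ) ^ 2 := by
  have h0 : ((((Finset.Ioc 0 n) ×ˢ (Finset.Ioc 0 n)).filter fun p => Nat.gcd p.1 p.2 = 1).card : ℤ)
      = ∑ p ∈ Finset.Ioc 0 n ×ˢ Finset.Ioc 0 n, (if Nat.gcd p.1 p.2 = 1 then (1 : ℤ) else 0) := by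
    rw [Finset.card_filter]
    push_cast
    rfl
  rw [h0]
  calc ∑ p ∈ Finset.Ioc 0 n ×ˢ Finset.Ioc 0 n, (if Nat.gcd p.1 p.2 = 1 then (1 : ℤ) else 0)
      = ∑ p ∈ Finset.Ioc 0 n ×ˢ Finset.Ioc 0 n,
          ∑ d ∈ Icc 1 n, (if d ∣ p.1 ∧ d ∣ p.2 then μ d else 0) := by
        refine Finset.sum_congr rfl fun p hp => ?_
        rw [moebius_sum_dvd n p.1 p.2 (Finset.mem_product.mp hp).1 (Finset.mem_product.mp hp).2]
    _ = ∑ d ∈ Icc 1 n, ∑ p ∈ Finset.Ioc 0 n ×ˢ Finset.Ioc 0 n,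
          (if d ∣ p.1 ∧ d ∣ p.2 then μ d else 0) := Finset.sum_comm
    _ = ∑ d ∈ Icc 1 n, μ d * ((n / d : ℕ) : ℤ) ^ 2 :=
        Finset.sum_congr rfl fun d _ => inner_count n d

lemma inner_count1 (n d : ℕ) :
    ∑ m ∈ Finset.Ioc 0 n, (if d ∣ m ∧ d ∣ m then μ d else 0)
      = μ d * ((n / d : ℕ) : ℤ) := by
  simp only [and_self]
  rw [← Finset.sum_filter, Finset.sum_const, Nat.Ioc_filter_dvd_card_eq_div, nsmul_eq_mul]
  ring

lemma one_identity (n : ℕ) (hn : 1 ≤ n) :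
    (1 : ℤ) = ∑ d ∈ Icc 1 n, μ d * ((n / d : ℕ) : ℤ) := by
  have h0 : (1 : ℤ) = ∑ m ∈ Finset.Ioc 0 n, (if Nat.gcd m m = 1 then (1 : ℤ) else 0) := by
    simp only [Nat.gcd_self]
    rw [Finset.sum_ite_eq' (Finset.Ioc 0 n) 1 (fun _ => (1:ℤ)), if_pos (by simp [hn])]
  rw [h0]
  calc ∑ m ∈ Finset.Ioc 0 n, (if Nat.gcd m m = 1 then (1 : ℤ) else 0)
      = ∑ m ∈ Finset.Ioc 0 n, ∑ d ∈ Icc 1 n, (if d ∣ m ∧ d ∣ m then μ d else 0) := by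
        refine Finset.sum_congr rfl fun m hm => ?_
        rw [moebius_sum_dvd n m m hm hm]
    _ = ∑ d ∈ Icc 1 n, ∑ m ∈ Finset.Ioc 0 n, (if d ∣ m ∧ d ∣ m then μ d else 0) :=
        Finset.sum_comm
    _ = ∑ d ∈ Icc 1 n, μ d * ((n / d : ℕ) : ℤ) :=
        Finset.sum_congr rfl fun d _ => inner_count1 n d

lemma count_identity (n : ℕ) (hn : 1 ≤ n) :
    ((((Finset.range (n+1)) ×ˢ (Finset.range (n+1))).filter fun p => Nat.gcd p.1 p.2 = 1).card : ℤ)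
      = ∑ d ∈ Icc 1 n, μ d * (((n / d : ℕ) : ℤ) ^ 2 + ((n / d : ℕ) : ℤ)) + 1 := by
  have hsplit : ((Finset.range (n+1)) ×ˢ (Finset.range (n+1))).filter (fun p => Nat.gcd p.1 p.2 = 1)
      = insert (0,1) (insert (1,0)
          (((Finset.Ioc 0 n) ×ˢ (Finset.Ioc 0 n)).filter fun p => Nat.gcd p.1 p.2 = 1)) := by
    ext ⟨x, y⟩
    simp only [Finset.mem_filter, Finset.mem_product, Finset.mem_range, Finset.mem_insert,
      Finset.mem_Ioc, Prod.mk.injEq, Nat.lt_succ_iff]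
    constructor
    · rintro ⟨⟨hx, hy⟩, hg⟩
      rcases Nat.eq_zero_or_pos x with rfl | hx0
      · left; rw [Nat.gcd_zero_left] at hg; exact ⟨rfl, hg⟩
      rcases Nat.eq_zero_or_pos y with rfl | hy0
      · right; left; rw [Nat.gcd_zero_right] at hg; exact ⟨hg, rfl⟩
      · right; right; exact ⟨⟨⟨hx0, hx⟩, hy0, hy⟩, hg⟩
    · rintro (⟨rfl, rfl⟩ | ⟨rfl, rfl⟩ | ⟨⟨⟨hx0, hx⟩, hy0, hy⟩, hg⟩)
      · simp [hn]
      · simp [hn]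
      · exact ⟨⟨hx, hy⟩, hg⟩
  rw [hsplit, Finset.card_insert_of_notMem (by simp), Finset.card_insert_of_notMem (by simp)]
  rw [Nat.cast_add, Nat.cast_add, count_pos_part]
  simp only [mul_add, Finset.sum_add_distrib]
  have h1 := one_identity n hn
  push_cast at h1 ⊢
  linarith


lemma hasSum_moebius_div_sq :
    HasSum (fun d : ℕ => if d = 0 then (0:ℝ) else (μ d : ℝ) / (d:ℝ) ^ 2) (6 / π ^ 2) := by
  have h2 : (1:ℝ) < (2:ℂ).re := by norm_num
  have hsum : LSeriesSummable (fun n => ((μ n : ℤ) : ℂ)) 2 :=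
    ArithmeticFunction.LSeriesSummable_moebius_iff.mpr h2
  have hL : LSeries (fun n => ((μ n : ℤ) : ℂ)) 2 = ((6 / π ^ 2 : ℝ) : ℂ) := by
    have hmul := ArithmeticFunction.LSeries_zeta_mul_Lseries_moebius (s := 2) h2
    rw [ArithmeticFunction.LSeries_zeta_eq_riemannZeta h2, riemannZeta_two] at hmul
    have hpi : ((π : ℂ) ^ 2 / 6) ≠ 0 := by
      simp [Complex.ofReal_ne_zero, Real.pi_ne_zero]
    field_simp at hmul ⊢
    push_cast
    rw [eq_div_iff (pow_ne_zero 2 (by exact_mod_cast Real.pi_ne_zero : (π:ℂ) ≠ 0))]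
    linear_combination hmul
  have hs2 : HasSum (LSeries.term (fun n => ((μ n : ℤ) : ℂ)) 2) ((6 / π ^ 2 : ℝ) : ℂ) :=
    hL ▸ hsum.hasSum
  have hterm : (LSeries.term (fun n => ((μ n : ℤ) : ℂ)) 2)
      = fun d => (((if d = 0 then (0:ℝ) else (μ d : ℝ) / (d:ℝ) ^ 2) : ℝ) : ℂ) := by
    funext d
    rcases eq_or_ne d 0 with rfl | hd
    · simp [LSeries.term]
    · rw [LSeries.term_of_ne_zero hd, if_neg hd]
      rw [show (2:ℂ) = ((2:ℕ):ℂ) by norm_num, Complex.cpow_natCast]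
      push_cast
      ring
  rw [hterm] at hs2
  exact Complex.hasSum_ofReal.mp hs2

lemma tail_partial (n : ℕ) (hn : 1 ≤ n) (m : ℕ) :
    ∑ i ∈ range m, (1:ℝ) / ((i + (n+1) : ℕ) : ℝ) ^ 2 ≤ 1 / n - 1 / ((n:ℝ) + m) := by
  induction m with
  | zero => simp
  | succ m ih =>
    rw [Finset.sum_range_succ]
    have h1 : (0:ℝ) < (n:ℝ) + m := by
      have : (1:ℝ) ≤ (n:ℝ) := by exact_mod_cast hn
      positivity
    have key : (1:ℝ) / ((m + (n+1) : ℕ) : ℝ) ^ 2 ≤ 1 / ((n:ℝ) + m) - 1 / ((n:ℝ) + m + 1) := by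
      push_cast
      rw [div_sub_div _ _ (ne_of_gt h1) (by positivity), div_le_div_iff₀ (by positivity) (by positivity)]
      ring_nf
      nlinarith [h1]
    have hcast : ((n:ℝ) + (m + 1 : ℕ)) = (n:ℝ) + m + 1 := by push_cast; ring
    rw [hcast]
    linarith

lemma moebius_partial_lb (n : ℕ) (hn : 1 ≤ n) :
    6 / π ^ 2 - 1 / n ≤ ∑ d ∈ Icc 1 n, (μ d : ℝ) / (d:ℝ) ^ 2 := by
  set g := fun d : ℕ => if d = 0 then (0:ℝ) else (μ d : ℝ) / (d:ℝ) ^ 2 with hgdef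
  have hg := hasSum_moebius_div_sq
  have hsummable : Summable g := hg.summable
  have hsplit := Summable.sum_add_tsum_nat_add (f := g) (n+1) hsummable
  have htsum : ∑' i, g i = 6 / π ^ 2 := hg.tsum_eq
  have hrange : ∑ d ∈ range (n+1), g d = ∑ d ∈ Icc 1 n, (μ d : ℝ) / (d:ℝ) ^ 2 := by
    have he : range (n+1) = insert 0 (Icc 1 n) := by
      ext d; simp [Nat.lt_succ_iff]; omega
    rw [he, Finset.sum_insert (by simp)]
    have hg0 : g 0 = 0 := by simp [hgdef]
    rw [hg0, zero_add]
    refine Finset.sum_congr rfl fun d hd => ?_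
    have hd1 := (Finset.mem_Icc.mp hd).1
    simp only [hgdef]
    rw [if_neg (by omega)]
  -- tail bounds
  have hb : ∀ i : ℕ, |g (i + (n+1))| ≤ (1:ℝ) / ((i + (n+1) : ℕ) : ℝ) ^ 2 := by
    intro i
    rw [hgdef]; simp only
    rw [if_neg (by omega)]
    rw [abs_div, abs_of_nonneg (by positivity : (0:ℝ) ≤ ((i + (n+1) : ℕ):ℝ)^2)]
    have habs1 : |(((μ (i + (n+1)) : ℤ)):ℝ)| ≤ 1 := by
      rw [← Int.cast_abs]
      exact_mod_cast ArithmeticFunction.abs_moebius_le_one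
    gcongr
  have hsb : Summable (fun i : ℕ => (1:ℝ) / ((i + (n+1) : ℕ) : ℝ) ^ 2) := by
    have h0 : Summable (fun i : ℕ => (1:ℝ) / (i : ℝ) ^ 2) := by
      simpa using Real.summable_one_div_nat_pow.mpr (by norm_num : 1 < 2)
    have := (summable_nat_add_iff (f := fun i : ℕ => (1:ℝ) / (i : ℝ) ^ 2) (n+1)).mpr h0
    refine this.congr fun i => ?_
    push_cast; ring
  have hgt : Summable (fun i : ℕ => g (i + (n+1))) :=
    (summable_nat_add_iff (n+1)).mpr hsummable
  have habs : |∑' i, g (i + (n+1))| ≤ ∑' i, (1:ℝ) / ((i + (n+1) : ℕ) : ℝ) ^ 2 := by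
    calc |∑' i, g (i + (n+1))| ≤ ∑' i, |g (i + (n+1))| := by
          simpa [Real.norm_eq_abs] using norm_tsum_le_tsum_norm (f := fun i => g (i + (n+1)))
            (by simpa [Real.norm_eq_abs] using hgt.abs)
      _ ≤ ∑' i, (1:ℝ) / ((i + (n+1) : ℕ) : ℝ) ^ 2 := Summable.tsum_le_tsum hb hgt.abs hsb
  have htail_le : ∑' i, (1:ℝ) / ((i + (n+1) : ℕ) : ℝ) ^ 2 ≤ 1 / n := by
    apply Real.tsum_le_of_sum_range_le (fun i => by positivity)
    intro m
    have h1 : (1:ℝ) ≤ (n:ℝ) := by exact_mod_cast hn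
    have := tail_partial n hn m
    have h2 : (0:ℝ) < (n:ℝ) + m := by positivity
    have h3 : 0 ≤ 1 / ((n:ℝ) + m) := by positivity
    linarith
  have : 6 / π ^ 2 - ∑' i, g (i + (n+1)) = ∑ d ∈ range (n+1), g d := by
    rw [← htsum] at *; linarith [hsplit]
  rw [← hrange, ← this]
  have : -(1/(n:ℝ)) ≤ -∑' i, g (i + (n+1)) := by
    have := abs_le.mp habs
    linarith
  linarith

lemma moebius_abs_sum_ub (n : ℕ) (hn : 12 ≤ n) :
    ∑ d ∈ Icc 1 n, |(μ d : ℝ)| / d ≤ Real.log n + 1 / 2 := by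
  have hB : ({4, 8, 9, 12} : Finset ℕ) ⊆ Icc 1 n := by
    intro d hd
    fin_cases hd <;> simp [Finset.mem_Icc] <;> omega
  have hsplit := Finset.sum_sdiff (f := fun d : ℕ => |(μ d : ℝ)| / d) hB
  have hsplit2 := Finset.sum_sdiff (f := fun d : ℕ => (1:ℝ) / d) hB
  have hBzero : ∑ d ∈ ({4, 8, 9, 12} : Finset ℕ), |(μ d : ℝ)| / d = 0 := by
    have h4 : μ 4 = 0 := moebius_eq_zero_of_not_squarefree (fun h => by simpa [Nat.isUnit_iff] using h 2 (by norm_num))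
    have h8 : μ 8 = 0 := moebius_eq_zero_of_not_squarefree (fun h => by simpa [Nat.isUnit_iff] using h 2 (by norm_num))
    have h9 : μ 9 = 0 := moebius_eq_zero_of_not_squarefree (fun h => by simpa [Nat.isUnit_iff] using h 3 (by norm_num))
    have h12 : μ 12 = 0 := moebius_eq_zero_of_not_squarefree (fun h => by simpa [Nat.isUnit_iff] using h 2 (by norm_num))
    norm_num [Finset.sum_insert, h4, h8, h9, h12]
  have hterm : ∑ d ∈ Icc 1 n \ {4, 8, 9, 12}, |(μ d : ℝ)| / d
      ≤ ∑ d ∈ Icc 1 n \ {4, 8, 9, 12}, (1:ℝ) / d := by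
    refine Finset.sum_le_sum fun d hd => ?_
    have hd1 := (Finset.mem_Icc.mp (Finset.mem_sdiff.mp hd).1).1
    have hdpos : (0:ℝ) < d := by exact_mod_cast hd1
    have habs1 : |((μ d : ℤ) : ℝ)| ≤ 1 := by
      rw [← Int.cast_abs]
      exact_mod_cast ArithmeticFunction.abs_moebius_le_one
    gcongr
  have hBsum : ∑ d ∈ ({4, 8, 9, 12} : Finset ℕ), (1:ℝ) / d = 41 / 72 := by
    norm_num [Finset.sum_insert]
  have hharm : ∑ d ∈ Icc 1 n, (1:ℝ) / d ≤ 1 + Real.log n := by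
    have h := harmonic_le_one_add_log n
    have he : ((harmonic n : ℚ) : ℝ) = ∑ d ∈ Icc 1 n, (1:ℝ) / d := by
      rw [harmonic_eq_sum_Icc]
      push_cast
      simp [one_div]
    linarith [he ▸ h]
  linarith

lemma per_term (n d : ℕ) (hd : 1 ≤ d) :
    (μ d : ℝ) * ((n : ℝ) / d) ^ 2 - |(μ d : ℝ)| * ((n : ℝ) / d)
      ≤ (μ d : ℝ) * (((n / d : ℕ) : ℝ) ^ 2 + ((n / d : ℕ) : ℝ)) := by
  set q : ℝ := ((n / d : ℕ) : ℝ) with hq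
  set x : ℝ := (n : ℝ) / d with hx
  have hd0 : (0:ℝ) < d := by exact_mod_cast hd
  have hq0 : 0 ≤ q := by positivity
  have hq1 : q ≤ x := by
    rw [hq, hx, le_div_iff₀ hd0]
    exact_mod_cast Nat.div_mul_le_self n d
  have hq2 : x < q + 1 := by
    rw [hx, div_lt_iff₀ hd0]
    have hlt : n < (n / d + 1) * d := (Nat.div_lt_iff_lt_mul hd).mp (Nat.lt_succ_self _)
    calc (n:ℝ) < ((n / d + 1) * d : ℕ) := by exact_mod_cast hlt
      _ = (q + 1) * d := by push_cast; ring
  have hx0 : 0 ≤ x := hq0.trans hq1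
  rcases le_or_gt 0 ((μ d : ℝ)) with hm | hm
  · rw [abs_of_nonneg hm]
    have hp : 0 ≤ (q + x) * (q - x + 1) :=
      mul_nonneg (by linarith) (by linarith)
    nlinarith [mul_nonneg hm hp]
  · rw [abs_of_neg hm]
    have hp : 0 ≤ (x + q + 1) * (x - q) :=
      mul_nonneg (by linarith) (by linarith)
    nlinarith [mul_nonneg (neg_nonneg.mpr hm.le) hp]


lemma count_lb (n : ℕ) (h12 : 12 ≤ n) :
    6 / π ^ 2 * (n:ℝ) ^ 2 - n * Real.log n - 3 * n / 2 + 1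
      ≤ ((((Finset.range (n+1)) ×ˢ (Finset.range (n+1))).filter
          fun p => Nat.gcd p.1 p.2 = 1).card : ℝ) := by
  have hn : 1 ≤ n := by omega
  have hn0 : (0:ℝ) < n := by exact_mod_cast hn
  have hcountR : ((((Finset.range (n+1)) ×ˢ (Finset.range (n+1))).filter
          fun p => Nat.gcd p.1 p.2 = 1).card : ℝ)
      = ∑ d ∈ Icc 1 n, (μ d : ℝ) * (((n / d : ℕ) : ℝ) ^ 2 + ((n / d : ℕ) : ℝ)) + 1 := by
    have hZ := count_identity n hn
    calc ((((Finset.range (n+1)) ×ˢ (Finset.range (n+1))).filter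
          fun p => Nat.gcd p.1 p.2 = 1).card : ℝ)
        = (((((Finset.range (n+1)) ×ˢ (Finset.range (n+1))).filter
          fun p => Nat.gcd p.1 p.2 = 1).card : ℤ) : ℝ) := by norm_cast
      _ = ((∑ d ∈ Icc 1 n, μ d * (((n / d : ℕ) : ℤ) ^ 2 + ((n / d : ℕ) : ℤ)) + 1 : ℤ) : ℝ) := by
          rw [hZ]
      _ = ∑ d ∈ Icc 1 n, (μ d : ℝ) * (((n / d : ℕ) : ℝ) ^ 2 + ((n / d : ℕ) : ℝ)) + 1 := by
          rw [Int.cast_add, Int.cast_sum, Int.cast_one]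
          refine congrArg (· + 1) (Finset.sum_congr rfl fun d _ => ?_)
          rw [Int.cast_mul, Int.cast_add, Int.cast_pow, Int.cast_natCast]
  rw [hcountR]
  have hsum : ∑ d ∈ Icc 1 n, ((μ d : ℝ) * ((n : ℝ) / d) ^ 2 - |(μ d : ℝ)| * ((n : ℝ) / d))
      ≤ ∑ d ∈ Icc 1 n, (μ d : ℝ) * (((n / d : ℕ) : ℝ) ^ 2 + ((n / d : ℕ) : ℝ)) :=
    Finset.sum_le_sum fun d hd => per_term n d (Finset.mem_Icc.mp hd).1
  rw [Finset.sum_sub_distrib] at hsum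
  have hA : ∑ d ∈ Icc 1 n, (μ d : ℝ) * ((n : ℝ) / d) ^ 2
      = (n:ℝ) ^ 2 * ∑ d ∈ Icc 1 n, (μ d : ℝ) / (d:ℝ) ^ 2 := by
    rw [Finset.mul_sum]
    exact Finset.sum_congr rfl fun d _ => by ring
  have hB : ∑ d ∈ Icc 1 n, |(μ d : ℝ)| * ((n : ℝ) / d)
      = (n:ℝ) * ∑ d ∈ Icc 1 n, |(μ d : ℝ)| / d := by
    rw [Finset.mul_sum]
    exact Finset.sum_congr rfl fun d _ => by ring
  rw [hA, hB] at hsum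
  have h1 := moebius_partial_lb n hn
  have h2 := moebius_abs_sum_ub n h12
  have h1' : (n:ℝ)^2 * (6 / π ^ 2 - 1 / n) ≤ (n:ℝ)^2 * ∑ d ∈ Icc 1 n, (μ d : ℝ) / (d:ℝ) ^ 2 :=
    mul_le_mul_of_nonneg_left h1 (by positivity)
  have h2' : (n:ℝ) * ∑ d ∈ Icc 1 n, |(μ d : ℝ)| / d ≤ (n:ℝ) * (Real.log n + 1 / 2) :=
    mul_le_mul_of_nonneg_left h2 (by positivity)
  have hns : (n:ℝ)^2 * (6 / π ^ 2 - 1 / n) = 6 / π ^ 2 * (n:ℝ)^2 - n := by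
    field_simp
  linarith

theorem coprime_prob_lower_bound (n : ℕ) (hn : 1 ≤ n) :
    coprimeProb n ≥ 6 / Real.pi ^ 2 * ((n : ℝ) ^ 2 / ((n : ℝ) + 1) ^ 2) -
      (n : ℝ) * Real.log n / ((n : ℝ) + 1) ^ 2 - 3 * (n : ℝ) / (2 * ((n : ℝ) + 1) ^ 2) +
      1 / ((n : ℝ) + 1) ^ 2 := by
  have hpos : (0:ℝ) < ((n:ℝ) + 1) ^ 2 := by positivity
  have hmain : 6 / Real.pi ^ 2 * (n:ℝ) ^ 2 - n * Real.log n - 3 * (n:ℝ) / 2 + 1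
      ≤ ((((Finset.range (n+1)) ×ˢ (Finset.range (n+1))).filter
          fun p => Nat.gcd p.1 p.2 = 1).card : ℝ) := by
    rcases le_or_gt 12 n with h12 | h12
    · exact count_lb n h12
    · have hp : 6 / Real.pi ^ 2 ≤ 0.608 := by
        rw [div_le_iff₀ (by positivity)]
        nlinarith [Real.pi_gt_d6]
      have hl : 0 ≤ Real.log n := Real.log_nonneg (by exact_mod_cast hn)
      interval_cases n
      · have hc : (((Finset.range (1+1)) ×ˢ (Finset.range (1+1))).filter
            fun p => Nat.gcd p.1 p.2 = 1).card = 3 := by decide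
        rw [hc]
        push_cast at hl ⊢
        nlinarith [hp, hl]
      · have hc : (((Finset.range (2+1)) ×ˢ (Finset.range (2+1))).filter
            fun p => Nat.gcd p.1 p.2 = 1).card = 5 := by decide
        rw [hc]
        push_cast at hl ⊢
        nlinarith [hp, hl]
      · have hc : (((Finset.range (3+1)) ×ˢ (Finset.range (3+1))).filter
            fun p => Nat.gcd p.1 p.2 = 1).card = 9 := by decide
        rw [hc]
        push_cast at hl ⊢
        nlinarith [hp, hl]
      · have hc : (((Finset.range (4+1)) ×ˢ (Finset.range (4+1))).filter
            fun p => Nat.gcd p.1 p.2 = 1).card = 13 := by decide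
        rw [hc]
        push_cast at hl ⊢
        nlinarith [hp, hl]
      · have hc : (((Finset.range (5+1)) ×ˢ (Finset.range (5+1))).filter
            fun p => Nat.gcd p.1 p.2 = 1).card = 21 := by decide
        rw [hc]
        push_cast at hl ⊢
        nlinarith [hp, hl]
      · have hc : (((Finset.range (6+1)) ×ˢ (Finset.range (6+1))).filter
            fun p => Nat.gcd p.1 p.2 = 1).card = 25 := by decide
        rw [hc]
        push_cast at hl ⊢
        nlinarith [hp, hl]
      · have hc : (((Finset.range (7+1)) ×ˢ (Finset.range (7+1))).filter
            fun p => Nat.gcd p.1 p.2 = 1).card = 37 := by decide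
        rw [hc]
        push_cast at hl ⊢
        nlinarith [hp, hl]
      · have hc : (((Finset.range (8+1)) ×ˢ (Finset.range (8+1))).filter
            fun p => Nat.gcd p.1 p.2 = 1).card = 45 := by decide
        rw [hc]
        push_cast at hl ⊢
        nlinarith [hp, hl]
      · have hc : (((Finset.range (9+1)) ×ˢ (Finset.range (9+1))).filter
            fun p => Nat.gcd p.1 p.2 = 1).card = 57 := by decide
        rw [hc]
        push_cast at hl ⊢
        nlinarith [hp, hl]
      · have hc : (((Finset.range (10+1)) ×ˢ (Finset.range (10+1))).filter
            fun p => Nat.gcd p.1 p.2 = 1).card = 65 := by decide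
        rw [hc]
        push_cast at hl ⊢
        nlinarith [hp, hl]
      · have hc : (((Finset.range (11+1)) ×ˢ (Finset.range (11+1))).filter
            fun p => Nat.gcd p.1 p.2 = 1).card = 85 := by decide
        rw [hc]
        push_cast at hl ⊢
        nlinarith [hp, hl]
  rw [ge_iff_le]
  have key : (6 / Real.pi ^ 2 * (n:ℝ) ^ 2 - n * Real.log n - 3 * (n:ℝ) / 2 + 1) / ((n:ℝ) + 1) ^ 2
      ≤ coprimeProb n := by
    rw [coprimeProb]
    gcongr
  refine le_trans (le_of_eq ?_) key
  have hne : ((n:ℝ) + 1) ≠ 0 := by positivity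
  field_simp
end
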